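/- Let L be a Lie algebra over a field K of characteristic ≠ 2, and let x ∈ L be an extremal element with associated linear form f_x, i.e. ⁅x, ⁅x, y⁆⁆ = f_x(y) • x for all y ∈ L. Then for all y, z ∈ L, the first Premet identity holds: 2 • ⁅x, ⁅y, ⁅x, z⁆⁆⁆ = f_x(⁅y,z⁆) • x - f_x(z) • ⁅x,y⁆ - f_x(y) • ⁅x,z⁆. -/
import Mathlib


theorem premet_identity_one {K L : Type*} [Field K] [LieRing L] [LieAlgebra K L]
    (hchar : (2 : K) ≠ 0) (x : L) (fx : L →ₗ[K] K)
    (hx : ∀ y : L, ⁅x, ⁅x, y⁆⁆ = fx y • x) :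
    ∀ y z : L, (2 : K) • ⁅x, ⁅y, ⁅x, z⁆⁆⁆ =
      fx ⁅y, z⁆ • x - fx z • ⁅x, y⁆ - fx y • ⁅x, z⁆ := by
  intro y z
  have hyx : (⁅y, x⁆ : L) = -⁅x, y⁆ := by rw [← lie_skew]
  have key : fx ⁅y, z⁆ • x
      = (2 : K) • ⁅x, ⁅y, ⁅x, z⁆⁆⁆ + fx y • ⁅x, z⁆ + fx z • ⁅x, y⁆ := by
    calc fx ⁅y, z⁆ • x = ⁅x, ⁅x, ⁅y, z⁆⁆⁆ := (hx _).symm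
      _ = ⁅x, ⁅⁅x, y⁆, z⁆⁆ + ⁅x, ⁅y, ⁅x, z⁆⁆⁆ := by
          rw [leibniz_lie x y z, lie_add]
      _ = ⁅⁅x, ⁅x, y⁆⁆, z⁆ + ⁅⁅x, y⁆, ⁅x, z⁆⁆ + ⁅x, ⁅y, ⁅x, z⁆⁆⁆ := by
          rw [leibniz_lie x ⁅x, y⁆ z]
      _ = fx y • ⁅x, z⁆ + (⁅x, ⁅y, ⁅x, z⁆⁆⁆ - ⁅y, ⁅x, ⁅x, z⁆⁆⁆) + ⁅x, ⁅y, ⁅x, z⁆⁆⁆ := by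
          rw [hx y, smul_lie, lie_lie]
      _ = fx y • ⁅x, z⁆ + (⁅x, ⁅y, ⁅x, z⁆⁆⁆ - fx z • -⁅x, y⁆) + ⁅x, ⁅y, ⁅x, z⁆⁆⁆ := by
          rw [hx z, lie_smul, hyx]
      _ = (2 : K) • ⁅x, ⁅y, ⁅x, z⁆⁆⁆ + fx y • ⁅x, z⁆ + fx z • ⁅x, y⁆ := by
          module
  rw [key]; abel
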